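/- On W(0,2), the map D₂^{0,2} defined on basis elements by D₂^{0,2}(L_m) = m³·I_m and D₂^{0,2}(I_m) = 0 is a derivation of the Lie algebra W(0,2). -/

import Mathlib

/-- A model of the Lie algebra `W(a,b)`: a complex Lie algebra with a basis
`{L m, I m | m : ℤ}` satisfying the defining bracket relations. -/
structure IsWab (a b : ℂ) (W : Type*) [LieRing W] [LieAlgebra ℂ W]
    (L I : ℤ → W) : Prop where
  bracket_LL : ∀ m n : ℤ, ⁅L m, L n⁆ = ((m - n : ℤ) : ℂ) • L (m + n)
  bracket_LI : ∀ m n : ℤ, ⁅L m, I n⁆ = (-((n : ℂ) + a + b * (m : ℂ))) • I (m + n)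
  bracket_II : ∀ m n : ℤ, ⁅I m, I n⁆ = 0
  basis : ∃ B : Module.Basis (ℤ ⊕ ℤ) ℂ W,
    (∀ m : ℤ, B (Sum.inl m) = L m) ∧ (∀ m : ℤ, B (Sum.inr m) = I m)

/-- `D₂^{0,2}` is a derivation of `W(0,2)`. -/
theorem derivation_W02 {W : Type*} [LieRing W] [LieAlgebra ℂ W]
    (L I : ℤ → W) (hW : IsWab 0 2 W L I) (D : W →ₗ[ℂ] W)
    (hDL : ∀ m : ℤ, D (L m) = ((m ^ 3 : ℤ) : ℂ) • I m)
    (hDI : ∀ m : ℤ, D (I m) = 0) :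
    ∀ x y : W, D ⁅x, y⁆ = ⁅D x, y⁆ + ⁅x, D y⁆ := by
  obtain ⟨B, hBL, hBI⟩ := hW.basis
  let f : W →ₗ[ℂ] W →ₗ[ℂ] W := LinearMap.mk₂ ℂ (fun x y => D ⁅x, y⁆)
    (fun x x' y => by simp [add_lie])
    (fun c x y => by simp [smul_lie])
    (fun x y y' => by simp [lie_add])
    (fun c x y => by simp [lie_smul])
  let g : W →ₗ[ℂ] W →ₗ[ℂ] W := LinearMap.mk₂ ℂ (fun x y => ⁅D x, y⁆ + ⁅x, D y⁆)
    (fun x x' y => by simp [add_lie, lie_add]; abel)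
    (fun c x y => by simp [smul_lie, lie_smul])
    (fun x y y' => by simp [add_lie, lie_add]; abel)
    (fun c x y => by simp [smul_lie, lie_smul])
  suffices h : f = g by
    intro x y
    have := LinearMap.congr_fun (LinearMap.congr_fun h x) y
    simpa [f, g] using this
  apply (B.ext fun i => B.ext fun j => ?_)
  rcases i with m | m <;> rcases j with n | n <;>
    simp only [f, g, LinearMap.mk₂_apply, hBL, hBI, hW.bracket_LL, hW.bracket_LI,
      hW.bracket_II, hDL, hDI, map_smul, lie_zero, zero_lie, smul_zero, zero_add,
      add_zero, map_zero, lie_smul, smul_lie, lie_skew]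
  · -- L m, L n
    rw [← lie_skew (I m) (L n), hW.bracket_LI, add_comm n m]
    match_scalars
    ring
  · -- I m, L n
    rw [← lie_skew (I m) (L n), hW.bracket_LI, map_neg, map_smul, hDI, smul_zero, neg_zero]
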